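/- Let 1 ≤ p ≤ q and let S_{p,q} denote the oriented star on p+q+1 vertices whose center has p in-neighbours and q out-neighbours. Then there exists N such that for all n ≥ N, exo(n, S_{p,q}) = (p−1)·n + ⌊(n+q−p)²/4⌋. -/

import Mathlib

/-- An oriented graph `G` contains a copy of the oriented graph `F`. -/
def Copies {α β : Type*} (F : α → α → Prop) (G : β → β → Prop) : Prop :=
  ∃ f : α → β, Function.Injective f ∧ ∀ a b, F a b → G (f a) (f b)

/-- The oriented Turán number. -/
noncomputable def exo {α : Type*} (n : ℕ) (F : α → α → Prop) : ℕ :=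
  sSup {m : ℕ | ∃ G : Fin n → Fin n → Prop,
    (∀ v, ¬ G v v) ∧ (∀ u v, G u v → ¬ G v u) ∧
    ¬ Copies F G ∧ {p : Fin n × Fin n | G p.1 p.2}.ncard = m}

/-- The oriented star `S_{p,q}` on `p+q+1` vertices: the center is vertex `0`,
vertices `1,…,p` are its in-neighbours and vertices `p+1,…,p+q` its out-neighbours. -/
def orientedStar (p q : ℕ) (i j : Fin (p + q + 1)) : Prop :=
  ((j : ℕ) = 0 ∧ 1 ≤ (i : ℕ) ∧ (i : ℕ) ≤ p) ∨ ((i : ℕ) = 0 ∧ p + 1 ≤ (j : ℕ))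


open Finset

lemma mod_inv1 (a i s : ℕ) (hi : i < a) (hs1 : 1 ≤ s) (hs : s < a) :
    (a + (i + s) % a - i) % a = s := by
  rcases lt_or_ge (i + s) a with h | h
  · rw [Nat.mod_eq_of_lt h, show a + (i + s) - i = a + s by omega,
      Nat.add_mod_left, Nat.mod_eq_of_lt hs]
  · have e1 : (i + s) % a = i + s - a := by
      rw [Nat.mod_eq_sub_mod h, Nat.mod_eq_of_lt (by omega)]
    rw [e1, show a + (i + s - a) - i = s by omega, Nat.mod_eq_of_lt hs]

lemma mod_inv2 (a i j : ℕ) (hi : i < a) (hj : j < a) :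
    (i + (a + j - i) % a) % a = j := by
  rcases le_or_gt i j with h | h
  · have e1 : (a + j - i) % a = j - i := by
      rw [show a + j - i = a + (j - i) by omega, Nat.add_mod_left, Nat.mod_eq_of_lt (by omega)]
    rw [e1, show i + (j - i) = j by omega, Nat.mod_eq_of_lt hj]
  · have e1 : (a + j - i) % a = a + j - i := Nat.mod_eq_of_lt (by omega)
    rw [e1, show i + (a + j - i) = a + j by omega, Nat.add_mod_left, Nat.mod_eq_of_lt hj]

lemma mod_inv3 (a i j : ℕ) (hi : i < a) (hj : j < a) :
    (a + i - (a + i - j) % a) % a = j := by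
  rcases le_or_gt j i with h | h
  · have e1 : (a + i - j) % a = i - j := by
      rw [show a + i - j = a + (i - j) by omega, Nat.add_mod_left, Nat.mod_eq_of_lt (by omega)]
    rw [e1, show a + i - (i - j) = a + j by omega, Nat.add_mod_left, Nat.mod_eq_of_lt hj]
  · have e1 : (a + i - j) % a = a + i - j := Nat.mod_eq_of_lt (by omega)
    rw [e1, show a + i - (a + i - j) = j by omega, Nat.mod_eq_of_lt hj]

/-- out-neighbour count in the circulant -/
lemma card_shift (a i : ℕ) (hi : i < a) (S : Finset ℕ) (hS : ∀ s ∈ S, 1 ≤ s ∧ s < a) :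
    (((Finset.range a)).filter (fun j => (a + j - i) % a ∈ S)).card = S.card := by
  apply Finset.card_nbij' (fun j => (a + j - i) % a) (fun s => (i + s) % a)
  · intro j hj; exact (Finset.mem_filter.1 hj).2
  · intro s hs
    obtain ⟨h1, h2⟩ := hS s hs
    refine Finset.mem_filter.2 ⟨Finset.mem_range.2 (Nat.mod_lt _ (by omega)), ?_⟩
    rw [mod_inv1 a i s hi h1 h2]; exact hs
  · intro j hj
    obtain ⟨hj1, hj2⟩ := Finset.mem_filter.1 hj
    exact mod_inv2 a i j hi (Finset.mem_range.1 hj1)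
  · intro s hs
    obtain ⟨h1, h2⟩ := hS s hs
    exact mod_inv1 a i s hi h1 h2

/-- in-neighbour count in the circulant -/
lemma card_shift' (a i : ℕ) (hi : i < a) (S : Finset ℕ) (hS : ∀ s ∈ S, 1 ≤ s ∧ s < a) :
    (((Finset.range a)).filter (fun j => (a + i - j) % a ∈ S)).card = S.card := by
  apply Finset.card_nbij' (fun j => (a + i - j) % a) (fun s => (a + i - s) % a)
  · intro j hj; exact (Finset.mem_filter.1 hj).2
  · intro s hs
    obtain ⟨h1, h2⟩ := hS s hs
    refine Finset.mem_filter.2 ⟨Finset.mem_range.2 (Nat.mod_lt _ (by omega)), ?_⟩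
    rw [mod_inv3 a i s hi h2]; exact hs
  · intro j hj
    obtain ⟨hj1, hj2⟩ := Finset.mem_filter.1 hj
    exact mod_inv3 a i j hi (Finset.mem_range.1 hj1)
  · intro s hs
    obtain ⟨h1, h2⟩ := hS s hs
    exact mod_inv3 a i s hi h2

lemma card_fin_lt {n a : ℕ} (hn : 0 < n) (h : a ≤ n) (P : ℕ → Prop) [DecidablePred P] :
    ((Finset.univ : Finset (Fin n)).filter fun j => j.val < a ∧ P j.val).card
      = ((Finset.range a).filter P).card := by
  apply Finset.card_nbij' (fun j => j.val) (fun k => ⟨k % n, Nat.mod_lt _ (by omega)⟩)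
  · intro j hj
    obtain ⟨-, h1, h2⟩ := Finset.mem_filter.1 hj
    exact Finset.mem_filter.2 ⟨Finset.mem_range.2 h1, h2⟩
  · intro k hk
    obtain ⟨h1, h2⟩ := Finset.mem_filter.1 hk
    have hk' : k < a := Finset.mem_range.1 h1
    have : k % n = k := Nat.mod_eq_of_lt (by omega)
    refine Finset.mem_filter.2 ⟨Finset.mem_univ _, ?_, ?_⟩ <;> simp only [this]
    · exact hk'
    · exact h2
  · intro j hj
    obtain ⟨-, h1, -⟩ := Finset.mem_filter.1 hj
    exact Fin.ext (Nat.mod_eq_of_lt (by beta_reduce; omega))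
  · intro k hk
    obtain ⟨h1, -⟩ := Finset.mem_filter.1 hk
    have hk' : k < a := Finset.mem_range.1 h1
    exact Nat.mod_eq_of_lt (by omega)

lemma card_fin_ge {n a : ℕ} (hn : 0 < n) (h : a ≤ n) (P : ℕ → Prop) [DecidablePred P] :
    ((Finset.univ : Finset (Fin n)).filter fun j => a ≤ j.val ∧ P (j.val - a)).card
      = ((Finset.range (n - a)).filter P).card := by
  apply Finset.card_nbij' (fun j => j.val - a) (fun k => ⟨(k + a) % n, Nat.mod_lt _ (by omega)⟩)
  · intro j hj
    obtain ⟨-, h1, h2⟩ := Finset.mem_filter.1 hj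
    exact Finset.mem_filter.2 ⟨Finset.mem_range.2 (by have := j.isLt; beta_reduce; omega), h2⟩
  · intro k hk
    obtain ⟨h1, h2⟩ := Finset.mem_filter.1 hk
    have hk' : k < n - a := Finset.mem_range.1 h1
    have e : (k + a) % n = k + a := Nat.mod_eq_of_lt (by omega)
    refine Finset.mem_filter.2 ⟨Finset.mem_univ _, ?_, ?_⟩ <;> simp only [e]
    · omega
    · simpa using h2
  · intro j hj
    obtain ⟨-, h1, -⟩ := Finset.mem_filter.1 hj
    exact Fin.ext (by
      show (j.val - a + a) % n = j.val
      rw [show j.val - a + a = j.val by omega, Nat.mod_eq_of_lt j.isLt])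
  · intro k hk
    obtain ⟨h1, -⟩ := Finset.mem_filter.1 hk
    have hk' : k < n - a := Finset.mem_range.1 h1
    have e : (k + a) % n = k + a := Nat.mod_eq_of_lt (by omega)
    simp only [e]; omega

lemma range_filter_one_le (m : ℕ) : (Finset.range (m + 1)).filter (fun x => 1 ≤ x) = Finset.Ico 1 (m + 1) := by
  ext x; simp [Finset.mem_Ico]; omega

lemma arith_sq_quarter (s b : ℕ) (hb : b = s / 2) : b * (s - b) = s ^ 2 / 4 := by
  rcases Nat.even_or_odd s with ⟨t, ht⟩ | ⟨t, ht⟩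
  · subst ht
    have hb' : b = t := by omega
    rw [hb', show t + t - t = t by omega, show (t + t) ^ 2 = 4 * (t * t) by ring,
      Nat.mul_div_cancel_left _ (by norm_num)]
  · subst ht
    have hb' : b = t := by omega
    rw [hb', show 2 * t + 1 - t = t + 1 by omega, show (2 * t + 1) ^ 2 = 4 * (t * (t + 1)) + 1 by ring]
    generalize t * (t + 1) = k
    omega

lemma arith_le_sq_quarter (y z : ℕ) : y * z ≤ (y + z) ^ 2 / 4 := by
  rw [Nat.le_div_iff_mul_le (by norm_num)]
  zify
  nlinarith [sq_nonneg ((y : ℤ) - z)]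

lemma copies_of (p q n : ℕ) (G : Fin n → Fin n → Prop)
    (hA : ∀ u v, G u v → ¬ G v u)
    (v : Fin n) (I O : Finset (Fin n)) (hIc : I.card = p) (hOc : O.card = q)
    (hI : ∀ u ∈ I, G u v) (hO : ∀ w ∈ O, G v w) : Copies (orientedStar p q) G := by
  have hvI : v ∉ I := fun h => hA v v (hI v h) (hI v h)
  have hvO : v ∉ O := fun h => hA v v (hO v h) (hO v h)
  have hIO : ∀ x, x ∈ I → x ∈ O → False := fun x h1 h2 => hA x v (hI x h1) (hO x h2)
  have key : ∀ (x : ↥I) (y : ↥O), (x : Fin n) ≠ (y : Fin n) :=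
    fun x y h => hIO _ x.2 (h ▸ y.2)
  refine ⟨fun k => if h1 : k.val = 0 then v
    else if h2 : k.val ≤ p then (I.orderIsoOfFin hIc ⟨k.val - 1, by omega⟩ : Fin n)
    else (O.orderIsoOfFin hOc ⟨k.val - p - 1, by
      have := k.isLt; omega⟩ : Fin n), ?_, ?_⟩
  · intro k l hkl
    dsimp only at hkl
    split_ifs at hkl with h1 h2 h3 h4 h5 h6 h7 h8
    · exact Fin.ext (by omega)
    · exact absurd (hkl ▸ (I.orderIsoOfFin hIc ⟨l.val - 1, by omega⟩).2) hvI
    · exact absurd (hkl ▸ (O.orderIsoOfFin hOc ⟨l.val - p - 1, by have := l.isLt; omega⟩).2) hvO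
    · exact absurd (hkl ▸ (I.orderIsoOfFin hIc ⟨k.val - 1, by omega⟩).2)
        (hkl ▸ hvI)
    · have h9 := (I.orderIsoOfFin hIc).injective (Subtype.coe_injective hkl)
      have h10 : k.val - 1 = l.val - 1 := congrArg Fin.val h9
      exact Fin.ext (by omega)
    · exact absurd hkl (key _ _)
    · exact absurd (hkl ▸ (O.orderIsoOfFin hOc ⟨k.val - p - 1, by have := k.isLt; omega⟩).2)
        (hkl ▸ hvO)
    · exact absurd hkl.symm (key _ _)
    · have h9 := (O.orderIsoOfFin hOc).injective (Subtype.coe_injective hkl)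
      have h10 : k.val - p - 1 = l.val - p - 1 := congrArg Fin.val h9
      exact Fin.ext (by omega)
  · intro x y hxy
    dsimp only
    rcases hxy with ⟨hy0, hx1, hx2⟩ | ⟨hx0, hy1⟩
    · rw [dif_pos hy0, dif_neg (by omega : ¬ x.val = 0), dif_pos hx2]
      exact hI _ (I.orderIsoOfFin hIc _).2
    · rw [dif_pos hx0, dif_neg (by omega : ¬ y.val = 0), dif_neg (by omega : ¬ y.val ≤ p)]
      exact hO _ (O.orderIsoOfFin hOc _).2
lemma upper_bound (p q n : ℕ) (hp : 1 ≤ p) (hpq : p ≤ q) (G : Fin n → Fin n → Prop)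
    (hA : ∀ u v, G u v → ¬ G v u) (hF : ¬ Copies (orientedStar p q) G) :
    {pr : Fin n × Fin n | G pr.1 pr.2}.ncard ≤ (p - 1) * n + (n + q - p) ^ 2 / 4 := by
  classical
  have hY : ∀ v : Fin n, ¬ ((Finset.univ.filter (fun u => G u v)).card ≤ p - 1) →
      (Finset.univ.filter (fun w => G v w)).card ≤ q - 1 := by
    intro v hv
    by_contra hout
    obtain ⟨I, hIsub, hIcard⟩ := Finset.exists_subset_card_eq
      (show p ≤ (Finset.univ.filter (fun u => G u v)).card by omega)
    obtain ⟨O, hOsub, hOcard⟩ := Finset.exists_subset_card_eq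
      (show q ≤ (Finset.univ.filter (fun w => G v w)).card by omega)
    exact hF (copies_of p q n G hA v I O hIcard hOcard
      (fun u hu => (Finset.mem_filter.1 (hIsub hu)).2)
      (fun w hw => (Finset.mem_filter.1 (hOsub hw)).2))
  have hm : {pr : Fin n × Fin n | G pr.1 pr.2}.ncard
      = ((Finset.univ : Finset (Fin n × Fin n)).filter fun pr => G pr.1 pr.2).card := by
    rw [Set.ncard_eq_toFinset_card']
    congr 1
    ext pr
    simp
  rw [hm]
  have h1 : ((Finset.univ : Finset (Fin n × Fin n)).filter fun pr => G pr.1 pr.2).card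
      = ∑ v : Fin n, (Finset.univ.filter (fun u => G u v)).card := by
    rw [Finset.card_filter, Fintype.sum_prod_type, Finset.sum_comm]
    exact Finset.sum_congr rfl fun v _ => (Finset.card_filter _ _).symm
  rw [h1]
  set X := (Finset.univ : Finset (Fin n)).filter
    (fun v => (Finset.univ.filter (fun u => G u v)).card ≤ p - 1) with hX
  set Y := (Finset.univ : Finset (Fin n)).filter
    (fun v => ¬ (Finset.univ.filter (fun u => G u v)).card ≤ p - 1) with hYdef
  have hxy : X.card + Y.card = n := by
    rw [hX, hYdef, Finset.card_filter_add_card_filter_not]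
    simp
  have hsplit : ∑ v : Fin n, (Finset.univ.filter (fun u => G u v)).card
      = ∑ v ∈ X, (Finset.univ.filter (fun u => G u v)).card
        + ∑ v ∈ Y, (Finset.univ.filter (fun u => G u v)).card :=
    (Finset.sum_filter_add_sum_filter_not Finset.univ _ _).symm
  have hbX : ∑ v ∈ X, (Finset.univ.filter (fun u => G u v)).card ≤ X.card * (p - 1) := by
    calc ∑ v ∈ X, (Finset.univ.filter (fun u => G u v)).card ≤ X.card • (p - 1) :=
          Finset.sum_le_card_nsmul X _ (p - 1) (fun v hv => (Finset.mem_filter.1 hv).2)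
      _ = X.card * (p - 1) := by rw [smul_eq_mul]
  have hper : ∀ v : Fin n, (Finset.univ.filter (fun u => G u v)).card
      = (∑ u ∈ X, if G u v then 1 else 0) + (∑ u ∈ Y, if G u v then 1 else 0) := by
    intro v
    rw [Finset.card_filter]
    exact (Finset.sum_filter_add_sum_filter_not Finset.univ _ _).symm
  have hb1 : (∑ v ∈ Y, ∑ u ∈ X, if G u v then 1 else 0) ≤ Y.card * X.card := by
    calc (∑ v ∈ Y, ∑ u ∈ X, if G u v then 1 else 0)
        ≤ ∑ _v ∈ Y, X.card := by
          apply Finset.sum_le_sum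
          intro v _
          calc (∑ u ∈ X, if G u v then 1 else 0) ≤ ∑ _u ∈ X, 1 :=
                Finset.sum_le_sum fun u _ => by split <;> omega
            _ = X.card := by rw [Finset.sum_const, smul_eq_mul, mul_one]
      _ = Y.card * X.card := by rw [Finset.sum_const, smul_eq_mul]
  have hb2 : (∑ v ∈ Y, ∑ u ∈ Y, if G u v then 1 else 0) ≤ Y.card * (q - 1) := by
    calc (∑ v ∈ Y, ∑ u ∈ Y, if G u v then 1 else 0)
        = ∑ u ∈ Y, ∑ v ∈ Y, if G u v then 1 else 0 := Finset.sum_comm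
      _ ≤ ∑ u ∈ Y, (q - 1) := by
          apply Finset.sum_le_sum
          intro u hu
          have e : (∑ v ∈ Y, if G u v then 1 else 0) = (Y.filter (fun v => G u v)).card :=
            (Finset.card_filter _ _).symm
          rw [e]
          calc (Y.filter (fun v => G u v)).card
              ≤ (Finset.univ.filter (fun v => G u v)).card :=
                Finset.card_le_card (Finset.filter_subset_filter _ (Finset.subset_univ _))
            _ ≤ q - 1 := hY u (Finset.mem_filter.1 hu).2
      _ = Y.card * (q - 1) := by rw [Finset.sum_const, smul_eq_mul]
  have hbY : ∑ v ∈ Y, (Finset.univ.filter (fun u => G u v)).card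
      ≤ Y.card * X.card + Y.card * (q - 1) := by
    calc ∑ v ∈ Y, (Finset.univ.filter (fun u => G u v)).card
        = (∑ v ∈ Y, ∑ u ∈ X, if G u v then 1 else 0)
          + (∑ v ∈ Y, ∑ u ∈ Y, if G u v then 1 else 0) := by
          rw [← Finset.sum_add_distrib]
          exact Finset.sum_congr rfl fun v _ => hper v
      _ ≤ Y.card * X.card + Y.card * (q - 1) := Nat.add_le_add hb1 hb2
  have harith : X.card * (p - 1) + (Y.card * X.card + Y.card * (q - 1))
      ≤ (p - 1) * n + (n + q - p) ^ 2 / 4 := by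
    have hq1 : q - 1 = (p - 1) + (q - p) := by omega
    have e1 : X.card * (p - 1) + Y.card * (p - 1) = (p - 1) * n := by
      rw [← Nat.add_mul, hxy, Nat.mul_comm]
    have e2 : Y.card * (X.card + (q - p)) ≤ (Y.card + (X.card + (q - p))) ^ 2 / 4 :=
      arith_le_sq_quarter _ _
    have e3 : Y.card + (X.card + (q - p)) = n + q - p := by omega
    calc X.card * (p - 1) + (Y.card * X.card + Y.card * (q - 1))
        = (X.card * (p - 1) + Y.card * (p - 1)) + Y.card * (X.card + (q - p)) := by
          rw [hq1]; ring
      _ ≤ (p - 1) * n + (n + q - p) ^ 2 / 4 := by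
          rw [e1]
          exact Nat.add_le_add_left (e3 ▸ e2) _
  rw [hsplit]
  exact le_trans (Nat.add_le_add hbX hbY) harith

def consG (p q a : ℕ) {n : ℕ} (i j : Fin n) : Prop :=
  (i.val < a ∧ j.val < a ∧ (a + j.val - i.val) % a ∈ Finset.Icc 1 (p - 1)) ∨
  (i.val < a ∧ a ≤ j.val) ∨
  (a ≤ i.val ∧ a ≤ j.val ∧
    ((n - a) + (j.val - a) - (i.val - a)) % (n - a) ∈ Finset.Icc 1 (q - 1))

instance (p q a n : ℕ) (i j : Fin n) : Decidable (consG p q a i j) := by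
  unfold consG; infer_instance

lemma circ_asymm (a r u v : ℕ) (hu : u < a) (hv : v < a) (hr : 2 * r < a)
    (h1 : (a + v - u) % a ∈ Finset.Icc 1 r) : (a + u - v) % a ∉ Finset.Icc 1 r := by
  intro h2
  rw [Finset.mem_Icc] at h1 h2
  have e : ((a + v - u) % a + (a + u - v) % a) % a = 0 := by
    rw [← Nat.add_mod, show (a + v - u) + (a + u - v) = a + a by omega,
      Nat.add_mod_left, Nat.mod_self]
  have hlt : (a + v - u) % a + (a + u - v) % a < a := by omega
  rw [Nat.mod_eq_of_lt hlt] at e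
  omega

lemma consG_irrefl (p q a n : ℕ) (hpa : 2 * p ≤ a) (hqb : 2 * q ≤ n - a) (v : Fin n) :
    ¬ consG p q a v v := by
  rintro (⟨h1, h2, h3⟩ | ⟨h1, h2⟩ | ⟨h1, h2, h3⟩)
  · rw [show a + v.val - v.val = a by omega, Nat.mod_self, Finset.mem_Icc] at h3
    omega
  · omega
  · rw [show (n - a) + (v.val - a) - (v.val - a) = n - a by omega, Nat.mod_self,
      Finset.mem_Icc] at h3
    omega

lemma consG_asymm (p q a n : ℕ) (hpa : 2 * p ≤ a) (hqb : 2 * q ≤ n - a) (u v : Fin n)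
    (h : consG p q a u v) : ¬ consG p q a v u := by
  rintro (⟨h1, h2, h3⟩ | ⟨h1, h2⟩ | ⟨h1, h2, h3⟩) <;>
    rcases h with ⟨g1, g2, g3⟩ | ⟨g1, g2⟩ | ⟨g1, g2, g3⟩
  · exact circ_asymm a (p - 1) u.val v.val g1 g2 (by omega) g3 h3
  · omega
  · omega
  · omega
  · omega
  · omega
  · omega
  · omega
  · exact circ_asymm (n - a) (q - 1) (u.val - a) (v.val - a)
      (by have := u.isLt; omega) (by have := v.isLt; omega) (by omega) g3 h3

lemma card_fin_ge_true {n a : ℕ} (hn : 0 < n) (h : a ≤ n) :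
    ((Finset.univ : Finset (Fin n)).filter fun j => a ≤ j.val).card = n - a := by
  have e : ((Finset.univ : Finset (Fin n)).filter fun j => a ≤ j.val)
      = ((Finset.univ : Finset (Fin n)).filter fun j => a ≤ j.val ∧ (fun _ : ℕ => True) (j.val - a)) := by
    apply Finset.filter_congr
    intro x _
    simp
  rw [e, card_fin_ge hn h (fun _ : ℕ => True)]
  rw [Finset.filter_true_of_mem (by intro x _; trivial), Finset.card_range]

lemma card_fin_lt_true {n a : ℕ} (hn : 0 < n) (h : a ≤ n) :
    ((Finset.univ : Finset (Fin n)).filter fun j => j.val < a).card = a := by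
  have e : ((Finset.univ : Finset (Fin n)).filter fun j => j.val < a)
      = ((Finset.univ : Finset (Fin n)).filter fun j => j.val < a ∧ (fun _ : ℕ => True) j.val) := by
    apply Finset.filter_congr
    intro x _
    simp
  rw [e, card_fin_lt hn h (fun _ : ℕ => True)]
  rw [Finset.filter_true_of_mem (by intro x _; trivial), Finset.card_range]

lemma consG_count (p q a n : ℕ) (hp : 1 ≤ p) (hq : 1 ≤ q) (hpa : p ≤ a) (hab : a ≤ n)
    (hqb : q ≤ n - a) :
    ((Finset.univ : Finset (Fin n × Fin n)).filter fun pr => consG p q a pr.1 pr.2).card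
      = a * ((p - 1) + (n - a)) + (n - a) * (q - 1) := by
  have hn : 0 < n := by omega
  rw [Finset.card_filter, Fintype.sum_prod_type]
  have hsum : ∀ i : Fin n, (∑ j : Fin n, if consG p q a i j then 1 else 0)
      = ((Finset.univ : Finset (Fin n)).filter (fun j => consG p q a i j)).card :=
    fun i => (Finset.card_filter _ _).symm
  calc (∑ i : Fin n, ∑ j : Fin n, if consG p q a i j then 1 else 0)
      = ∑ i : Fin n, ((Finset.univ : Finset (Fin n)).filter (fun j => consG p q a i j)).card :=
        Finset.sum_congr rfl fun i _ => hsum i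
    _ = ∑ i ∈ (Finset.univ : Finset (Fin n)).filter (fun i => i.val < a),
          ((Finset.univ : Finset (Fin n)).filter (fun j => consG p q a i j)).card
        + ∑ i ∈ (Finset.univ : Finset (Fin n)).filter (fun i => ¬ i.val < a),
          ((Finset.univ : Finset (Fin n)).filter (fun j => consG p q a i j)).card :=
        (Finset.sum_filter_add_sum_filter_not Finset.univ _ _).symm
    _ = a * ((p - 1) + (n - a)) + (n - a) * (q - 1) := by
        have hA : ∀ i : Fin n, i.val < a →
            ((Finset.univ : Finset (Fin n)).filter (fun j => consG p q a i j)).card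
              = (p - 1) + (n - a) := by
          intro i hi
          have e1 : (Finset.univ : Finset (Fin n)).filter (fun j => consG p q a i j)
              = ((Finset.univ : Finset (Fin n)).filter
                  (fun j => (j.val < a ∧ (a + j.val - i.val) % a ∈ Finset.Icc 1 (p - 1))
                    ∨ a ≤ j.val)) := by
            apply Finset.filter_congr
            intro j _
            unfold consG
            constructor
            · rintro (⟨h1, h2, h3⟩ | ⟨h1, h2⟩ | ⟨h1, h2, h3⟩)
              · exact Or.inl ⟨h2, h3⟩
              · exact Or.inr h2
              · omega
            · rintro (⟨h1, h2⟩ | h1)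
              · exact Or.inl ⟨hi, h1, h2⟩
              · exact Or.inr (Or.inl ⟨hi, h1⟩)
          rw [e1, Finset.filter_or, Finset.card_union_of_disjoint (by
            rw [Finset.disjoint_left]
            intro x hx1 hx2
            rw [Finset.mem_filter] at hx1 hx2
            omega)]
          have e2 : ((Finset.univ : Finset (Fin n)).filter
              (fun j => j.val < a ∧ (a + j.val - i.val) % a ∈ Finset.Icc 1 (p - 1))).card
                = p - 1 := by
            rw [card_fin_lt hn hab (fun u => (a + u - i.val) % a ∈ Finset.Icc 1 (p - 1))]
            rw [card_shift a i.val hi (Finset.Icc 1 (p - 1))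
              (fun s hs => by rw [Finset.mem_Icc] at hs; omega)]
            rw [Nat.card_Icc]
            omega
          rw [e2, card_fin_ge_true hn hab]
        have hB : ∀ i : Fin n, ¬ i.val < a →
            ((Finset.univ : Finset (Fin n)).filter (fun j => consG p q a i j)).card
              = q - 1 := by
          intro i hi
          have e1 : (Finset.univ : Finset (Fin n)).filter (fun j => consG p q a i j)
              = ((Finset.univ : Finset (Fin n)).filter
                  (fun j => a ≤ j.val ∧
                    ((n - a) + (j.val - a) - (i.val - a)) % (n - a) ∈ Finset.Icc 1 (q - 1))) := by
            apply Finset.filter_congr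
            intro j _
            unfold consG
            constructor
            · rintro (⟨h1, h2, h3⟩ | ⟨h1, h2⟩ | ⟨h1, h2, h3⟩)
              · omega
              · omega
              · exact ⟨h2, h3⟩
            · rintro ⟨h1, h2⟩
              exact Or.inr (Or.inr ⟨by omega, h1, h2⟩)
          rw [e1, card_fin_ge hn hab
            (fun y => ((n - a) + y - (i.val - a)) % (n - a) ∈ Finset.Icc 1 (q - 1))]
          rw [card_shift (n - a) (i.val - a) (by have := i.isLt; omega) (Finset.Icc 1 (q - 1))
            (fun s hs => by rw [Finset.mem_Icc] at hs; omega)]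
          rw [Nat.card_Icc]
          omega
        rw [Finset.sum_congr rfl (fun i hi => hA i (Finset.mem_filter.1 hi).2),
          Finset.sum_congr rfl (fun i hi => hB i (Finset.mem_filter.1 hi).2),
          Finset.sum_const, Finset.sum_const, card_fin_lt_true hn hab, smul_eq_mul]
        have e3 : ((Finset.univ : Finset (Fin n)).filter (fun i : Fin n => ¬ i.val < a)).card
            = n - a := by
          have : ((Finset.univ : Finset (Fin n)).filter (fun i : Fin n => ¬ i.val < a))
              = ((Finset.univ : Finset (Fin n)).filter (fun i : Fin n => a ≤ i.val)) := by
            apply Finset.filter_congr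
            intro x _
            constructor <;> omega
          rw [this, card_fin_ge_true hn hab]
        rw [e3, smul_eq_mul]

lemma consG_free (p q a n : ℕ) (hp : 1 ≤ p) (hpq : p ≤ q) (hpa : p ≤ a) (hab : a ≤ n)
    (hqb : q ≤ n - a) : ¬ Copies (orientedStar p q) (consG p q a (n := n)) := by
  have hn : 0 < n := by omega
  rintro ⟨f, hinj, hmap⟩
  set c := f ⟨0, by omega⟩ with hc
  by_cases hca : c.val < a
  · -- center in A: p distinct in-neighbours but in-degree ≤ p - 1
    have hchar : ∀ u : Fin n, consG p q a u c →
        (u.val < a ∧ (a + c.val - u.val) % a ∈ Finset.Icc 1 (p - 1)) := by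
      rintro u (⟨h1, h2, h3⟩ | ⟨h1, h2⟩ | ⟨h1, h2, h3⟩)
      · exact ⟨h1, h3⟩
      · omega
      · omega
    have hcard : ((Finset.univ : Finset (Fin n)).filter
        (fun u => u.val < a ∧ (a + c.val - u.val) % a ∈ Finset.Icc 1 (p - 1))).card = p - 1 := by
      rw [card_fin_lt hn hab (fun u => (a + c.val - u) % a ∈ Finset.Icc 1 (p - 1))]
      rw [card_shift' a c.val hca (Finset.Icc 1 (p - 1))
        (fun s hs => by rw [Finset.mem_Icc] at hs; omega)]
      rw [Nat.card_Icc]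
      omega
    set T := (Finset.univ : Finset (Fin (p + q + 1))).filter
      (fun k => k.val < p + 1 ∧ 1 ≤ k.val) with hT
    have hTcard : T.card = p := by
      rw [hT, card_fin_lt (by omega) (by omega) (fun u => 1 ≤ u), range_filter_one_le,
        Nat.card_Ico]
      omega
    have hle : T.card ≤ p - 1 := by
      calc T.card = (T.image f).card := (Finset.card_image_of_injective T hinj).symm
        _ ≤ p - 1 := by
            rw [← hcard]
            apply Finset.card_le_card
            intro x hx
            obtain ⟨k, hk, rfl⟩ := Finset.mem_image.1 hx
            obtain ⟨-, h1, h2⟩ := Finset.mem_filter.1 hk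
            refine Finset.mem_filter.2 ⟨Finset.mem_univ _, hchar _ ?_⟩
            exact hmap k ⟨0, by omega⟩ (Or.inl ⟨rfl, h2, by omega⟩)
    omega
  · -- center in B: q distinct out-neighbours but out-degree ≤ q - 1
    have hchar : ∀ w : Fin n, consG p q a c w →
        (a ≤ w.val ∧ ((n - a) + (w.val - a) - (c.val - a)) % (n - a) ∈ Finset.Icc 1 (q - 1)) := by
      rintro w (⟨h1, h2, h3⟩ | ⟨h1, h2⟩ | ⟨h1, h2, h3⟩)
      · omega
      · omega
      · exact ⟨h2, h3⟩
    have hcard : ((Finset.univ : Finset (Fin n)).filter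
        (fun w => a ≤ w.val ∧
          ((n - a) + (w.val - a) - (c.val - a)) % (n - a) ∈ Finset.Icc 1 (q - 1))).card
        = q - 1 := by
      rw [card_fin_ge hn hab
        (fun y => ((n - a) + y - (c.val - a)) % (n - a) ∈ Finset.Icc 1 (q - 1))]
      rw [card_shift (n - a) (c.val - a) (by have := c.isLt; omega) (Finset.Icc 1 (q - 1))
        (fun s hs => by rw [Finset.mem_Icc] at hs; omega)]
      rw [Nat.card_Icc]
      omega
    set T := (Finset.univ : Finset (Fin (p + q + 1))).filter
      (fun k => p + 1 ≤ k.val) with hT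
    have hTcard : T.card = q := by
      rw [hT, card_fin_ge_true (by omega) (by omega)]
      omega
    have hle : T.card ≤ q - 1 := by
      calc T.card = (T.image f).card := (Finset.card_image_of_injective T hinj).symm
        _ ≤ q - 1 := by
            rw [← hcard]
            apply Finset.card_le_card
            intro x hx
            obtain ⟨k, hk, rfl⟩ := Finset.mem_image.1 hx
            obtain ⟨-, h1⟩ := Finset.mem_filter.1 hk
            refine Finset.mem_filter.2 ⟨Finset.mem_univ _, hchar _ ?_⟩
            exact hmap ⟨0, by omega⟩ k (Or.inr ⟨rfl, h1⟩)
    omega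

lemma cons_ncard (p q a n : ℕ) (hp : 1 ≤ p) (hq : 1 ≤ q) (hpa : p ≤ a) (hab : a ≤ n)
    (hqb : q ≤ n - a) :
    {pr : Fin n × Fin n | consG p q a pr.1 pr.2}.ncard
      = a * ((p - 1) + (n - a)) + (n - a) * (q - 1) := by
  classical
  have hm : {pr : Fin n × Fin n | consG p q a pr.1 pr.2}.ncard
      = ((Finset.univ : Finset (Fin n × Fin n)).filter fun pr => consG p q a pr.1 pr.2).card := by
    rw [Set.ncard_eq_toFinset_card']
    congr 1
    ext pr
    simp
  rw [hm, consG_count p q a n hp hq hpa hab hqb]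

/-- for `1 ≤ p ≤ q` and sufficiently large `n`,
`exo(n, S_{p,q}) = (p-1)·n + ⌊(n+q-p)²/4⌋`. -/
theorem stmt_8 (p q : ℕ) (hp : 1 ≤ p) (hpq : p ≤ q) :
    ∃ N : ℕ, ∀ n ≥ N, exo n (orientedStar p q) = (p - 1) * n + (n + q - p) ^ 2 / 4 := by
  refine ⟨4 * (p + q) + 8, fun n hn => ?_⟩
  set b := (n + q - p) / 2 with hb
  set a := n - b with ha
  have hba : b ≤ n := by omega
  have hnab : n - a = b := by omega
  have hpa : p ≤ a := by omega
  have hqb : q ≤ n - a := by omega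
  have hab : a ≤ n := by omega
  have h2pa : 2 * p ≤ a := by omega
  have h2qb : 2 * q ≤ n - a := by omega
  have hcount : a * ((p - 1) + (n - a)) + (n - a) * (q - 1)
      = (p - 1) * n + (n + q - p) ^ 2 / 4 := by
    have key : (n - a) * (a + (q - p)) = (n + q - p) ^ 2 / 4 := by
      rw [hnab, show a + (q - p) = (n + q - p) - b by omega]
      exact arith_sq_quarter (n + q - p) b hb
    have hq1 : q - 1 = (p - 1) + (q - p) := by omega
    calc a * ((p - 1) + (n - a)) + (n - a) * (q - 1)
        = (p - 1) * (a + (n - a)) + (n - a) * (a + (q - p)) := by rw [hq1]; ring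
      _ = (p - 1) * n + (n + q - p) ^ 2 / 4 := by
          rw [show a + (n - a) = n by omega, key]
  have hmem : (p - 1) * n + (n + q - p) ^ 2 / 4 ∈ {m : ℕ | ∃ G : Fin n → Fin n → Prop,
      (∀ v, ¬ G v v) ∧ (∀ u v, G u v → ¬ G v u) ∧
      ¬ Copies (orientedStar p q) G ∧ {pr : Fin n × Fin n | G pr.1 pr.2}.ncard = m} := by
    refine ⟨consG p q a, consG_irrefl p q a n h2pa h2qb,
      consG_asymm p q a n h2pa h2qb,
      consG_free p q a n hp hpq hpa hab hqb, ?_⟩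
    rw [cons_ncard p q a n hp (by omega) hpa hab hqb, hcount]
  have hub : ∀ m ∈ {m : ℕ | ∃ G : Fin n → Fin n → Prop,
      (∀ v, ¬ G v v) ∧ (∀ u v, G u v → ¬ G v u) ∧
      ¬ Copies (orientedStar p q) G ∧ {pr : Fin n × Fin n | G pr.1 pr.2}.ncard = m},
      m ≤ (p - 1) * n + (n + q - p) ^ 2 / 4 := by
    rintro m ⟨G, hirr, hasym, hfree, hcard⟩
    exact hcard ▸ upper_bound p q n hp hpq G hasym hfree
  unfold exo
  exact le_antisymm (csSup_le ⟨_, hmem⟩ hub) (le_csSup ⟨_, hub⟩ hmem)
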